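/- Let T be a d×d stochastic matrix (nonnegative entries, rows summing to 1) and D a real symmetric d×d matrix with D_{ii} arbitrary (only off-diagonal entries used). Define the Davies map Γ : M_d(ℂ) → M_d(ℂ) by Γ(E_{jj}) = Σ_i T_{ij} E_{ii} for each j (equivalently Γ(dia(φ)) = dia(Tφ)) and Γ(E_{ij}) = D_{ij} E_{ij} for i ≠ j, where E_{ij} are the matrix units. Then Γ is completely positive (equivalently, its Choi matrix Σ_{i,j} E_{ij} ⊗ Γ(E_{ij}) is positive semidefinite) if and only if the d×d Hermitian matrix M with M_{ii} = T_{ii} and M_{ij} = D_{ij} for i ≠ j is positive semidefinite. -/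

import Mathlib

open Kronecker
open Matrix
open scoped ComplexOrder

/-- The Davies map determined by a stochastic matrix `T` (acting on the diagonal) and a
decoherence matrix `D` (damping the off-diagonal entries):
`Γ(M)_{ii} = Σ_j T_{ij} M_{jj}` and `Γ(M)_{ij} = D_{ij} M_{ij}` for `i ≠ j`,
so that `Γ(E_{jj}) = Σ_i T_{ij} E_{ii}` and `Γ(E_{ij}) = D_{ij} E_{ij}` for `i ≠ j`. -/
noncomputable def daviesMap {d : ℕ} (T D : Matrix (Fin d) (Fin d) ℝ)
    (M : Matrix (Fin d) (Fin d) ℂ) : Matrix (Fin d) (Fin d) ℂ :=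
  fun i j => if i = j then ∑ k, (T i k : ℂ) * M k k else (D i j : ℂ) * M i j

/-- The Choi–Jamiołkowski matrix of the Davies map:
`C(Γ) = Σ_{i,j} E_{ij} ⊗ Γ(E_{ij})`. -/
noncomputable def daviesChoi {d : ℕ} (T D : Matrix (Fin d) (Fin d) ℝ) :
    Matrix (Fin d × Fin d) (Fin d × Fin d) ℂ :=
  ∑ i : Fin d, ∑ j : Fin d,
    (Matrix.single i j (1 : ℂ)) ⊗ₖ daviesMap T D (Matrix.single i j (1 : ℂ))

/-- The Davies map built from a stochastic matrix `T` and a real symmetric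
decoherence matrix `D` is completely positive (its Choi matrix is positive semidefinite)
if and only if the Hermitian matrix with diagonal `T_{ii}` and off-diagonal `D_{ij}` is
positive semidefinite. -/
lemma daviesChoi_apply {d : ℕ} (T D : Matrix (Fin d) (Fin d) ℝ) (a b c e : Fin d) :
    daviesChoi T D (a, b) (c, e) =
      if b = e then (if a = c then (T b a : ℂ) else 0)
      else (if a = b ∧ c = e then (D b e : ℂ) else 0) := by
  unfold daviesChoi daviesMap
  simp only [Matrix.sum_apply, Matrix.kroneckerMap_apply, Matrix.kroneckerMap, Matrix.single,
    Matrix.of_apply, ite_mul, mul_ite, one_mul, mul_one, zero_mul, mul_zero]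
  simp [ite_and, Finset.sum_ite_eq, Finset.sum_ite_eq']
  simp [eq_comm]

lemma quadform {d : ℕ} (T D : Matrix (Fin d) (Fin d) ℝ) (x : Fin d × Fin d → ℂ) :
    star x ⬝ᵥ daviesChoi T D *ᵥ x =
      (star (fun i => x (i, i)) ⬝ᵥ
        (fun i j => if i = j then (T i i : ℂ) else (D i j : ℂ) :
          Matrix (Fin d) (Fin d) ℂ) *ᵥ (fun i => x (i, i)))
      + ∑ a : Fin d, ∑ b : Fin d,
          (if a = b then 0 else (T b a : ℂ) * (star (x (a, b)) * x (a, b))) := by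
  have key : ∀ a b : Fin d, (∑ q : Fin d × Fin d, daviesChoi T D (a, b) q * x q) =
      if a = b then ∑ c, (if a = c then (T a a : ℂ) else (D a c : ℂ)) * x (c, c)
      else (T b a : ℂ) * x (a, b) := by
    intro a b
    rw [Fintype.sum_prod_type]
    by_cases h : a = b
    · subst h
      rw [if_pos rfl]
      simp only [daviesChoi_apply, if_pos rfl, true_and]
      refine Finset.sum_congr rfl fun c _ => ?_
      by_cases hc : a = c
      · subst hc
        rw [Finset.sum_eq_single a]
        · simp
        · intro e _ he; simp [he.symm, Ne.symm he]
        · simp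
      · rw [Finset.sum_eq_single c]
        · simp [hc, Ne.symm hc]
        · intro e _ he; by_cases hae : a = e <;> simp [hae, hc, he, Ne.symm he]
        · simp
    · rw [if_neg h]
      rw [Finset.sum_eq_single a]
      · rw [Finset.sum_eq_single b] <;> simp [daviesChoi_apply, h]
        intro e he; simp [Ne.symm he, he]
      · intro c _ hc
        apply Finset.sum_eq_zero
        intro e _
        by_cases hbe : b = e <;> simp [daviesChoi_apply, hbe, h, Ne.symm hc, hc]
      · simp
  simp only [dotProduct, mulVec, Pi.star_apply, dotProduct]
  rw [Fintype.sum_prod_type]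
  rw [← Finset.sum_add_distrib]
  refine Finset.sum_congr rfl fun a _ => ?_
  have : ∀ b : Fin d, star (x (a, b)) * (∑ q : Fin d × Fin d, daviesChoi T D (a, b) q * x q)
      = (if a = b then star (x (a,a)) * ∑ c, (if a = c then (T a a : ℂ) else (D a c : ℂ)) * x (c, c) else 0)
      + (if a = b then 0 else (T b a : ℂ) * (star (x (a, b)) * x (a, b))) := by
    intro b
    rw [key a b]
    by_cases h : a = b
    · subst h; simp
    · simp [h]; ring
  rw [Finset.sum_congr rfl fun b _ => this b, Finset.sum_add_distrib, Finset.sum_ite_eq Finset.univ a]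
  simp
theorem davies_cp_iff (d : ℕ) (T D : Matrix (Fin d) (Fin d) ℝ)
    (hT0 : ∀ i j, 0 ≤ T i j) (hT1 : ∀ i, ∑ j, T i j = 1) (hD : Dᵀ = D) :
    (daviesChoi T D).PosSemidef ↔
      (Matrix.PosSemidef
        (fun i j => if i = j then (T i i : ℂ) else (D i j : ℂ) :
          Matrix (Fin d) (Fin d) ℂ)) := by
  have hDsymm : ∀ i j, D j i = D i j := fun i j => by
    simpa using congrFun (congrFun hD i) j
  constructor
  · intro hC
    rw [posSemidef_iff_dotProduct_mulVec] at hC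
    refine posSemidef_iff_dotProduct_mulVec.mpr ?_
    constructor
    · unfold Matrix.IsHermitian
      ext i j
      show star (if j = i then (T j j : ℂ) else (D j i : ℂ)) = (if i = j then (T i i : ℂ) else (D i j : ℂ))
      by_cases h : i = j
      · simp [h]
      · simp [h, Ne.symm h, hDsymm i j, Complex.conj_ofReal]
    · intro y
      have := hC.2 (fun p => if p.1 = p.2 then y p.1 else 0)
      rw [quadform] at this
      simpa [ite_and, apply_ite] using this
  · intro hM
    replace hM := posSemidef_iff_dotProduct_mulVec.mp hM
    rw [posSemidef_iff_dotProduct_mulVec]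
    refine ⟨?_, ?_⟩
    · unfold Matrix.IsHermitian
      ext ⟨a, b⟩ ⟨c, e⟩
      simp only [conjTranspose_apply, daviesChoi_apply]
      split_ifs <;>
        simp_all [Complex.conj_ofReal, hDsymm] <;> simp_all [eq_comm]
    · intro x
      rw [quadform]
      refine add_nonneg (hM.2 _) ?_
      refine Finset.sum_nonneg fun a _ => Finset.sum_nonneg fun b _ => ?_
      by_cases h : a = b
      · simp [h]
      · rw [if_neg h]
        refine mul_nonneg ?_ (star_mul_self_nonneg _)
        exact_mod_cast Complex.zero_le_real.mpr (hT0 b a)
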